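/- Let N ≥ 1, let 0 = x₀ < x₁ < ⋯ < x_N < x_{N+1} = ∞, c₁ > ⋯ > c_N > c_{N+1} = 0 with c₀ = +∞, and d₁,…,d_{N+1} satisfy cᵢxᵢ + dᵢ = c_{i+1}xᵢ + d_{i+1} for i = 1,…,N. Let Ũ(y) = −xᵢ·y + c_{i+1}xᵢ + d_{i+1} for c_{i+1} ≤ y < cᵢ, i = 0,…,N, be the dual of the piecewise linear utility. Fix α > 0 and y > 0 and let Z be a standard normal random variable. Then E[Ũ(y e^{−α²/2} e^{−αZ})] = Σ_{i=0}^{N} Aᵢ(y), where Aᵢ(y) = −xᵢ·y·(Φ(c̄_{i+1}(y)+α) − Φ(c̄ᵢ(y)+α)) + (c_{i+1}xᵢ + d_{i+1})·(Φ(c̄_{i+1}(y)) − Φ(c̄ᵢ(y))), with c̄ᵢ(y) = (ln y − ln cᵢ)/α − α/2 for i = 1,…,N, c̄₀(y) = −∞, c̄_{N+1}(y) = +∞, Φ the standard normal cumulative distribution function, and the conventions Φ(−∞) = 0, Φ(+∞) = 1. -/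

import Mathlib

open Real Set Filter MeasureTheory

/-- The standard normal cumulative distribution function
`Φ(t) = ∫_{-∞}^t (2π)^{-1/2} e^{-u²/2} du`. -/
noncomputable def stdNormalCdf : ℝ → ℝ :=
  fun t => ∫ u in Iic t, Real.exp (-u ^ 2 / 2) / Real.sqrt (2 * Real.pi)

noncomputable def nd (z : ℝ) : ℝ := Real.exp (-z ^ 2 / 2) / Real.sqrt (2 * Real.pi)

lemma stdNormalCdf_eq_nd (t : ℝ) : stdNormalCdf t = ∫ z in Iic t, nd z := rfl

lemma integrable_nd : Integrable nd := by
  have h := (integrable_exp_neg_mul_sq (show (0:ℝ) < 1/2 by norm_num)).div_const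
    (Real.sqrt (2 * Real.pi))
  refine h.congr (Eventually.of_forall fun z => ?_)
  simp only [nd]
  ring_nf

lemma integral_nd : (∫ z, nd z) = 1 := by
  have h : (∫ z : ℝ, Real.exp (-(1/2 : ℝ) * z ^ 2)) = Real.sqrt (Real.pi / (1/2)) :=
    integral_gaussian (1/2)
  have h2 : (∫ z, nd z) = (∫ z : ℝ, Real.exp (-(1/2 : ℝ) * z ^ 2)) / Real.sqrt (2 * Real.pi) := by
    rw [← integral_div]
    refine integral_congr_ae (Eventually.of_forall fun z => ?_)
    simp only [nd]; ring_nf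
  rw [h2, h]
  rw [show Real.pi / (1/2) = 2 * Real.pi by ring]
  exact div_self (by positivity)

lemma integrable_nd_shift (α : ℝ) : Integrable (fun z => nd (z + α)) :=
  ((measurePreserving_add_right volume α).integrable_comp_emb
    (measurableEmbedding_addRight α)).2 integrable_nd

lemma integral_nd_shift (α : ℝ) : (∫ z, nd (z + α)) = 1 := by
  rw [(measurePreserving_add_right volume α).integral_comp (measurableEmbedding_addRight α) nd]
  exact integral_nd

lemma integral_Iic_nd_shift (α t : ℝ) :
    (∫ z in Iic t, nd (z + α)) = stdNormalCdf (t + α) := by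
  have h := (measurePreserving_add_right volume α).setIntegral_preimage_emb
    (measurableEmbedding_addRight α) nd (Iic (t + α))
  rw [stdNormalCdf_eq_nd, ← h]
  congr 1
  ext z
  simp [Set.mem_preimage]

lemma setIntegral_Ioc_split {f : ℝ → ℝ} {a b : ℝ} (hab : a ≤ b) (hf : IntegrableOn f (Iic b)) :
    (∫ z in Ioc a b, f z) = (∫ z in Iic b, f z) - ∫ z in Iic a, f z := by
  have h1 : IntegrableOn f (Iic a) := hf.mono_set (Iic_subset_Iic.2 hab)
  have h2 : IntegrableOn f (Ioc a b) := hf.mono_set (fun z hz => hz.2)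
  have h := setIntegral_union (Iic_disjoint_Ioc le_rfl) measurableSet_Ioc h1 h2
  rw [Iic_union_Ioc_eq_Iic hab] at h
  linarith

lemma setIntegral_Ioi_split {f : ℝ → ℝ} {a : ℝ} (hf : Integrable f) :
    (∫ z in Ioi a, f z) = (∫ z, f z) - ∫ z in Iic a, f z := by
  have h := setIntegral_union (Iic_disjoint_Ioi (le_refl a)) measurableSet_Ioi
    hf.integrableOn hf.integrableOn
  rw [Iic_union_Ioi, setIntegral_univ] at h
  linarith

/-- the expectation of the piecewise-linear dual utility `Ũ` of the
lognormal variable `y e^{-α²/2} e^{-αZ}` (`Z` standard normal) equals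
`Σ_{i=0}^N A_i(y)` with
`A_i(y) = -x_i y (Φ(c̄_{i+1}(y)+α) - Φ(c̄_i(y)+α)) + (c_{i+1}x_i + d_{i+1})(Φ(c̄_{i+1}(y)) - Φ(c̄_i(y)))`,
`c̄_i(y) = (ln y - ln c_i)/α - α/2`, with conventions `Φ(c̄_0) = 0`, `Φ(c̄_{N+1}) = 1`
(and similarly for the shifted values). The expectation is written as an integral
against the standard normal density. -/
theorem stmt_9 (N : ℕ) (hN : 1 ≤ N) (x c d : ℕ → ℝ)
    (hx0 : x 0 = 0)
    (hxmono : ∀ i < N, x i < x (i + 1))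
    (hcmono : ∀ i, 1 ≤ i → i ≤ N → c (i + 1) < c i)
    (hcN : c (N + 1) = 0)
    (hcont : ∀ i, 1 ≤ i → i ≤ N → c i * x i + d i = c (i + 1) * x i + d (i + 1))
    (Ut : ℝ → ℝ)
    (hUt : ∀ i ≤ N, ∀ z : ℝ, c (i + 1) ≤ z → (i = 0 ∨ z < c i) →
      Ut z = -(x i) * z + c (i + 1) * x i + d (i + 1))
    (α y : ℝ) (hα : 0 < α) (hy : 0 < y) :
    let cb : ℕ → ℝ := fun i => (Real.log y - Real.log (c i)) / α - α / 2
    let PhiL : ℕ → ℝ := fun i =>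
      if i = 0 then 0 else if i = N + 1 then 1 else stdNormalCdf (cb i)
    let PhiA : ℕ → ℝ := fun i =>
      if i = 0 then 0 else if i = N + 1 then 1 else stdNormalCdf (cb i + α)
    (∫ z : ℝ, (Real.exp (-z ^ 2 / 2) / Real.sqrt (2 * Real.pi)) *
        Ut (y * Real.exp (-α ^ 2 / 2) * Real.exp (-α * z))) =
      ∑ i ∈ Finset.range (N + 1),
        (-(x i) * y * (PhiA (i + 1) - PhiA i) +
          (c (i + 1) * x i + d (i + 1)) * (PhiL (i + 1) - PhiL i)) := by
  intro cb PhiL PhiA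
  set g : ℝ → ℝ := fun z => y * Real.exp (-α ^ 2 / 2) * Real.exp (-α * z) with hgdef
  set f : ℝ → ℝ := fun z => nd z * Ut (g z) with hfdef
  set K : ℕ → ℝ := fun i => c (i + 1) * x i + d (i + 1) with hKdef
  set eE : ℕ → ℝ → ℝ := fun i z => -(x i) * y * nd (z + α) + K i * nd z with heEdef
  have hgpos : ∀ z, 0 < g z := fun z => by simp only [hgdef]; positivity
  -- positivity of c j for 1 ≤ j ≤ N
  have hcpos : ∀ j, 1 ≤ j → j ≤ N → 0 < c j := by
    intro j h1 h2
    have key : ∀ k, j ≤ k → k ≤ N → c (k + 1) < c j := by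
      intro k hjk
      induction k, hjk using Nat.le_induction with
      | base => intro h; exact hcmono j h1 h
      | succ k hk ih =>
        intro hkN
        have h1' : c (k + 1 + 1) < c (k + 1) := hcmono (k + 1) (Nat.le_add_left 1 k) hkN
        have h2' : c (k + 1) < c j := ih (Nat.le_of_succ_le hkN)
        linarith
    have := key N h2 le_rfl
    rw [hcN] at this; linarith
  -- log characterization of the regions
  have hlt : ∀ j, 1 ≤ j → j ≤ N → ∀ z : ℝ, (g z < c j ↔ cb j < z) := by
    intro j h1 h2 z
    have hcj := hcpos j h1 h2
    rw [← Real.log_lt_log_iff (hgpos z) hcj]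
    have hlg : Real.log (g z) = Real.log y + (-α ^ 2 / 2) + (-α * z) := by
      simp only [hgdef]
      rw [Real.log_mul (by positivity) (Real.exp_ne_zero _),
        Real.log_mul (ne_of_gt hy) (Real.exp_ne_zero _), Real.log_exp, Real.log_exp]
    rw [hlg]
    simp only [cb]
    rw [sub_lt_iff_lt_add, div_lt_iff₀ hα]
    constructor <;> intro h <;> nlinarith
  have hle : ∀ j, 1 ≤ j → j ≤ N → ∀ z : ℝ, (c j ≤ g z ↔ z ≤ cb j) := by
    intro j h1 h2 z
    rw [← not_lt, ← not_lt, not_iff_not]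
    exact hlt j h1 h2 z
  -- monotonicity of cb
  have hcb_mono : ∀ j, 1 ≤ j → j + 1 ≤ N → cb j < cb (j + 1) := by
    intro j h1 h2
    have hc1 : 0 < c (j + 1) := hcpos (j + 1) (Nat.le_add_left 1 j) h2
    have hlog := Real.log_lt_log hc1 (hcmono j h1 (Nat.le_of_succ_le h2))
    simp only [cb]
    gcongr
  -- pointwise identity nd z * g z = y * nd (z + α)
  have ndg : ∀ z, nd z * g z = y * nd (z + α) := by
    intro z
    have hs : (0:ℝ) < Real.sqrt (2 * Real.pi) := Real.sqrt_pos.2 (by positivity)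
    simp only [nd, hgdef]
    rw [div_mul_eq_mul_div, mul_div_assoc', mul_comm]
    congr 1
    rw [show y * Real.exp (-α ^ 2 / 2) * Real.exp (-α * z) * Real.exp (-z ^ 2 / 2)
        = y * (Real.exp (-α ^ 2 / 2) * Real.exp (-α * z) * Real.exp (-z ^ 2 / 2)) by ring,
      ← Real.exp_add, ← Real.exp_add]
    congr 2
    ring
  -- equality of f with the explicit piece on each region
  have hEq : ∀ i, i ≤ N → ∀ z : ℝ, (1 ≤ i → cb i < z) → (i < N → z ≤ cb (i + 1)) →
      f z = eE i z := by
    intro i hiN z hlo hhi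
    have h1 : c (i + 1) ≤ g z := by
      rcases eq_or_lt_of_le hiN with h | h
      · rw [h, hcN]; exact (hgpos z).le
      · exact (hle (i + 1) (Nat.le_add_left 1 i) h z).2 (hhi h)
    have h2 : i = 0 ∨ g z < c i := by
      rcases Nat.eq_zero_or_pos i with h | h
      · exact Or.inl h
      · exact Or.inr ((hlt i h hiN z).2 (hlo h))
    simp only [hfdef, heEdef, hKdef]
    rw [hUt i hiN (g z) h1 h2]
    linear_combination (-(x i)) * ndg z
  have hintEE : ∀ i, Integrable (eE i) := by
    intro i
    simp only [heEdef]
    exact ((integrable_nd_shift α).const_mul _).add (integrable_nd.const_mul _)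
  -- integral of eE i on a set
  have hsplitInt : ∀ (i : ℕ) (s : Set ℝ),
      (∫ z in s, eE i z) =
        -(x i) * y * (∫ z in s, nd (z + α)) + K i * ∫ z in s, nd z := by
    intro i s
    simp only [heEdef]
    rw [integral_add (((integrable_nd_shift α).integrableOn).const_mul _)
      ((integrable_nd.integrableOn).const_mul _), integral_const_mul, integral_const_mul]
  -- integrability of f on Iic (cb m)
  have hIntIic : ∀ m, 1 ≤ m → m ≤ N → IntegrableOn f (Iic (cb m)) := by
    intro m h1
    induction m, h1 using Nat.le_induction with
    | base =>
      intro _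
      refine ((hintEE 0).integrableOn).congr_fun ?_ measurableSet_Iic
      intro z hz
      exact (hEq 0 (Nat.zero_le N) z (by omega) (fun _ => hz)).symm
    | succ m hm ih =>
      intro hmN
      have hmN' : m ≤ N := Nat.le_of_succ_le hmN
      have hcb := hcb_mono m hm hmN
      have hIoc : IntegrableOn f (Ioc (cb m) (cb (m + 1))) := by
        refine ((hintEE m).integrableOn).congr_fun ?_ measurableSet_Ioc
        intro z hz
        exact (hEq m hmN' z (fun _ => hz.1) (fun _ => hz.2)).symm
      have := (ih hmN').union hIoc
      rwa [Iic_union_Ioc_eq_Iic hcb.le] at this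
  -- global integrability of f
  have hIoiN : IntegrableOn f (Ioi (cb N)) := by
    refine ((hintEE N).integrableOn).congr_fun ?_ measurableSet_Ioi
    intro z hz
    exact (hEq N le_rfl z (fun _ => hz) (by omega)).symm
  have hIntf : Integrable f := by
    have h := (hIntIic N hN le_rfl).union hIoiN
    rwa [Iic_union_Ioi, integrableOn_univ] at h
  -- the telescoping function
  set P : ℕ → ℝ := fun i =>
    if i = 0 then 0 else if i = N + 1 then (∫ z, f z) else ∫ z in Iic (cb i), f z with hPdef
  have key : ∀ i ∈ Finset.range (N + 1),
      (-(x i) * y * (PhiA (i + 1) - PhiA i) + (c (i + 1) * x i + d (i + 1)) *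
        (PhiL (i + 1) - PhiL i)) = P (i + 1) - P i := by
    intro i hi
    rw [Finset.mem_range] at hi
    have hiN : i ≤ N := Nat.lt_succ_iff.1 hi
    rcases Nat.eq_zero_or_pos i with hi0 | hi1
    · -- i = 0
      subst hi0
      have h1 : (1 : ℕ) ≠ 0 := one_ne_zero
      have h2 : (1 : ℕ) ≠ N + 1 := by omega
      have hP1 : P 1 = ∫ z in Iic (cb 1), f z := by
        simp only [hPdef]; rw [if_neg h1, if_neg h2]
      have hP0 : P 0 = 0 := by simp [hPdef]
      have hcongr : (∫ z in Iic (cb 1), f z) = ∫ z in Iic (cb 1), eE 0 z :=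
        setIntegral_congr_fun measurableSet_Iic
          (fun z hz => hEq 0 (Nat.zero_le N) z (by omega) (fun _ => hz))
      rw [hP1, hP0, hcongr, hsplitInt, integral_Iic_nd_shift, ← stdNormalCdf_eq_nd]
      simp [PhiA, PhiL, h2, hKdef]
      rw [if_neg (by omega : ¬ N = 0), if_neg (by omega : ¬ N = 0)]
    · rcases eq_or_lt_of_le hiN with hiN' | hiN'
      · -- i = N
        subst hiN'
        have hi0 : i ≠ 0 := by omega
        have hiN1 : i ≠ i + 1 := by omega
        have hPN1 : P (i + 1) = ∫ z, f z := by simp [hPdef]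
        have hPN : P i = ∫ z in Iic (cb i), f z := by
          simp only [hPdef]; rw [if_neg hi0, if_neg hiN1]
        have hIoi : (∫ z in Ioi (cb i), f z) = (∫ z, f z) - ∫ z in Iic (cb i), f z :=
          setIntegral_Ioi_split hIntf
        have hcongr : (∫ z in Ioi (cb i), f z) = ∫ z in Ioi (cb i), eE i z :=
          setIntegral_congr_fun measurableSet_Ioi
            (fun z hz => hEq i le_rfl z (fun _ => hz) (by omega))
        rw [hPN1, hPN, ← hIoi, hcongr, hsplitInt]
        have hIoiA : (∫ z in Ioi (cb i), nd (z + α)) = 1 - stdNormalCdf (cb i + α) := by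
          rw [setIntegral_Ioi_split (integrable_nd_shift α), integral_nd_shift,
            integral_Iic_nd_shift]
        have hIoiL : (∫ z in Ioi (cb i), nd z) = 1 - stdNormalCdf (cb i) := by
          rw [setIntegral_Ioi_split integrable_nd, integral_nd, ← stdNormalCdf_eq_nd]
        rw [hIoiA, hIoiL]
        simp [PhiA, PhiL, hi0, hiN1, hKdef]
      · -- 1 ≤ i < N
        have hi0 : i ≠ 0 := by omega
        have hiN1 : i ≠ N + 1 := by omega
        have hi10 : i + 1 ≠ 0 := Nat.succ_ne_zero i
        have hi1N1 : i + 1 ≠ N + 1 := by omega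
        have hi1N : i + 1 ≤ N := hiN'
        have hcb := hcb_mono i hi1 hi1N
        have hPi1 : P (i + 1) = ∫ z in Iic (cb (i + 1)), f z := by
          simp only [hPdef]; rw [if_neg hi10, if_neg hi1N1]
        have hPi : P i = ∫ z in Iic (cb i), f z := by
          simp only [hPdef]; rw [if_neg hi0, if_neg hiN1]
        have hIoc : (∫ z in Ioc (cb i) (cb (i + 1)), f z)
            = (∫ z in Iic (cb (i + 1)), f z) - ∫ z in Iic (cb i), f z :=
          setIntegral_Ioc_split hcb.le (hIntIic (i + 1) (by omega) hi1N)
        have hcongr : (∫ z in Ioc (cb i) (cb (i + 1)), f z)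
            = ∫ z in Ioc (cb i) (cb (i + 1)), eE i z :=
          setIntegral_congr_fun measurableSet_Ioc
            (fun z hz => hEq i hiN z (fun _ => hz.1) (fun _ => hz.2))
        rw [hPi1, hPi, ← hIoc, hcongr, hsplitInt]
        have hIocA : (∫ z in Ioc (cb i) (cb (i + 1)), nd (z + α))
            = stdNormalCdf (cb (i + 1) + α) - stdNormalCdf (cb i + α) := by
          rw [setIntegral_Ioc_split hcb.le (integrable_nd_shift α).integrableOn,
            integral_Iic_nd_shift, integral_Iic_nd_shift]
        have hIocL : (∫ z in Ioc (cb i) (cb (i + 1)), nd z)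
            = stdNormalCdf (cb (i + 1)) - stdNormalCdf (cb i) := by
          rw [setIntegral_Ioc_split hcb.le integrable_nd.integrableOn,
            ← stdNormalCdf_eq_nd, ← stdNormalCdf_eq_nd]
        rw [hIocA, hIocL]
        simp [PhiA, PhiL, hi0, hiN1, hi10, hi1N1, hKdef]
        rw [if_neg (by omega : ¬ i = N), if_neg (by omega : ¬ i = N)]
  rw [Finset.sum_congr rfl key, Finset.sum_range_sub]
  have hPN1 : P (N + 1) = ∫ z, f z := by simp [hPdef]
  have hP0 : P 0 = 0 := by simp [hPdef]
  rw [hPN1, hP0, sub_zero]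
  rfl
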